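/- If J ≥ 2 is even, then a_J^+(x_1,…,x_J) = ∑_{k=2,4,…,J} (−4)^{k/2}·f_{J,k}(x_1,…,x_J) and a_J^−(x_1,…,x_J) = −4 − a_J^+(x_1,…,x_J). If J ≥ 1 is odd, then a_J^+(x_1,…,x_J) = 2 + ∑_{k=1,3,…,J} (−1)^{(k+1)/2}·2^k·f_{J,k}(x_1,…,x_J) and a_J^−(x_1,…,x_J) = 4 − a_J^+(x_1,…,x_J). (Proposition A.1) -/

import Mathlib

/-- The `J × J` real symmetric matrix `A_J^ε(x₁, …, x_J)` (vertices `0`-indexed):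
`A_J^ε = -2 ∑ᵢ xᵢ E_{i,i} + ∑_{i=1}^{J-1} (E_{i,i+1} + E_{i+1,i}) + ε (E_{1,J} + E_{J,1})`. -/
def matA (J : ℕ) (ε : ℝ) (x : ℕ → ℝ) : Matrix (Fin J) (Fin J) ℝ :=
  Matrix.of fun i j =>
    (if (i : ℕ) = (j : ℕ) then -2 * x (i : ℕ) else 0)
    + (if (i : ℕ) + 1 = (j : ℕ) ∨ (j : ℕ) + 1 = (i : ℕ) then 1 else 0)
    + (if (i : ℕ) = 0 ∧ (j : ℕ) = J - 1 then ε else 0)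
    + (if (j : ℕ) = 0 ∧ (i : ℕ) = J - 1 then ε else 0)

/-- `a_J^+ = det A_J^+` if `J ≡ 0, 1 (mod 4)` and `a_J^+ = -det A_J^-` if `J ≡ 2, 3 (mod 4)`. -/
noncomputable def aPlus (J : ℕ) (x : ℕ → ℝ) : ℝ :=
  if J % 4 = 0 ∨ J % 4 = 1 then (matA J 1 x).det else -(matA J (-1) x).det

/-- `a_J^- = -det A_J^-` if `J ≡ 0, 1 (mod 4)` and `a_J^- = det A_J^+` if `J ≡ 2, 3 (mod 4)`. -/
noncomputable def aMinus (J : ℕ) (x : ℕ → ℝ) : ℝ :=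
  if J % 4 = 0 ∨ J % 4 = 1 then -(matA J (-1) x).det else (matA J 1 x).det

/-- The edge of the cycle on `{0, …, J-1}` starting at vertex `s` (`0`-indexed version of
the edges `{1,2}, {2,3}, …, {J-1,J}, {J,1}`). -/
def cycEdge (J s : ℕ) : Finset ℕ := {s, (s + 1) % J}

/-- `[[J]]_k`: collections of pairwise disjoint edges of the cycle on `J` vertices
(each edge recorded by its starting vertex) covering exactly `J - k` vertices, i.e.
consisting of `(J-k)/2` pairwise disjoint edges. -/
def edgeCollections (J k : ℕ) : Finset (Finset ℕ) :=
  (Finset.range J).powerset.filter fun A =>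
    ((A.biUnion fun s => cycEdge J s).card + k = J) ∧ (2 * A.card + k = J)

/-- The homogeneous degree-`k` polynomial `f_{J,k}(x₁,…,x_J) = ∑_{A ∈ [[J]]_k} x_A`,
where `x_A` is the product of the variables at vertices not covered by `A`. -/
def fJk (J k : ℕ) (x : ℕ → ℝ) : ℝ :=
  ∑ A ∈ edgeCollections J k, ∏ j ∈ (Finset.range J) \ (A.biUnion fun s => cycEdge J s), x j


def matT (n : ℕ) (d : ℕ → ℝ) : Matrix (Fin n) (Fin n) ℝ :=
  Matrix.of fun i j =>
    if (i : ℕ) = (j : ℕ) then d (i : ℕ)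
    else if (i : ℕ) + 1 = (j : ℕ) ∨ (j : ℕ) + 1 = (i : ℕ) then 1 else 0

lemma coe_succAbove {n : ℕ} (p : Fin (n+1)) (i : Fin n) :
    ((p.succAbove i : Fin (n+1)) : ℕ) = if (i : ℕ) < (p : ℕ) then (i : ℕ) else (i : ℕ) + 1 := by
  rw [Fin.succAbove]
  split_ifs with h1 h2 h3
  · rfl
  · exact absurd (Fin.lt_def.mp h1) h2
  · exact absurd (Fin.lt_def.mpr (by simpa using h3)) h1
  · rfl

lemma detT_zero (d : ℕ → ℝ) : (matT 0 d).det = 1 := Matrix.det_fin_zero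

lemma detT_one (d : ℕ → ℝ) : (matT 1 d).det = d 0 := by
  rw [Matrix.det_fin_one]; rfl

lemma detT_rec (n : ℕ) (d : ℕ → ℝ) :
    (matT (n+2) d).det = d (n+1) * (matT (n+1) d).det - (matT n d).det := by
  set M := matT (n+2) d with hM
  have hsub1 : M.submatrix (Fin.last (n+1)).succAbove (Fin.last (n+1)).succAbove
      = matT (n+1) d := by
    ext i j
    simp only [hM, matT, Fin.succAbove_last, Matrix.submatrix_apply, Matrix.of_apply,
      Fin.coe_castSucc]
  set b : Fin (n+2) := (Fin.last n).castSucc with hb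
  have hKdet : (M.submatrix (Fin.last (n+1)).succAbove b.succAbove).det = (matT n d).det := by
    set K := M.submatrix (Fin.last (n+1)).succAbove b.succAbove with hK
    have hone : K (Fin.last n) (Fin.last n) = 1 := by
      simp only [hK, hM, Matrix.submatrix_apply, Fin.succAbove_last, matT, Matrix.of_apply,
        coe_succAbove, Fin.coe_castSucc, Fin.val_last, hb]
      split_ifs <;> first | rfl | omega
    rw [Matrix.det_succ_column K (Fin.last n),
      Finset.sum_eq_single_of_mem (Fin.last n) (Finset.mem_univ _)]
    · have hmin : K.submatrix (Fin.last n).succAbove (Fin.last n).succAbove = matT n d := by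
        ext i j
        have hi := i.isLt
        have hj := j.isLt
        simp only [hK, hM, Matrix.submatrix_apply, Fin.succAbove_last, matT, Matrix.of_apply,
          coe_succAbove, Fin.coe_castSucc, Fin.val_last, hb]
        split_ifs <;> first | rfl | omega | simp_all | (congr 1; omega)
      rw [hmin, hone, Fin.val_last]
      have : (-1 : ℝ) ^ (n + n) = 1 := by
        rw [← two_mul]; exact (Even.neg_one_pow ⟨n, by ring⟩)
      rw [this]; ring
    · intro i _ hi
      have hzero : K i (Fin.last n) = 0 := by
        have hiv : (i : ℕ) ≠ n := fun h => hi (Fin.ext (by simpa [Fin.val_last] using h))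
        have := i.isLt
        simp only [hK, hM, Matrix.submatrix_apply, Fin.succAbove_last, matT, Matrix.of_apply,
          coe_succAbove, Fin.coe_castSucc, Fin.val_last, hb]
        split_ifs <;> first | rfl | omega
      rw [hzero]; ring
  rw [Matrix.det_succ_row M (Fin.last (n+1)),
    Finset.sum_eq_add_of_mem (Fin.last (n+1)) b (Finset.mem_univ _) (Finset.mem_univ _)
      (by simp [hb, Fin.ext_iff])]
  · have h1 : M (Fin.last (n+1)) (Fin.last (n+1)) = d (n+1) := by
      simp [hM, matT, Fin.val_last]
    have h2 : M (Fin.last (n+1)) b = 1 := by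
      have hb' : ((Fin.last n).castSucc : ℕ) = n := rfl
      simp only [hM, matT, Matrix.of_apply, Fin.val_last, hb, hb']
      split_ifs <;> first | rfl | omega | simp_all
    rw [h1, h2, hsub1, hKdet, Fin.val_last, hb]
    have hb' : ((Fin.last n).castSucc : ℕ) = n := rfl
    rw [hb']
    have e1 : (-1 : ℝ) ^ (n + 1 + (n + 1)) = 1 := by
      rw [show n+1+(n+1) = 2*(n+1) by ring]; exact (Even.neg_one_pow ⟨n+1, by ring⟩)
    have e2 : (-1 : ℝ) ^ (n + 1 + n) = -1 := by
      exact Odd.neg_one_pow ⟨n, by ring⟩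
    rw [e1, e2]; ring
  · intro c _ hc
    obtain ⟨hc1, hc2⟩ := hc
    have hcv1 : (c : ℕ) ≠ n + 1 := fun h => hc1 (Fin.ext (by simpa [Fin.val_last] using h))
    have hcv2 : (c : ℕ) ≠ n := fun h => hc2 (Fin.ext (by simpa [hb, Fin.coe_castSucc] using h))
    have := c.isLt
    have hzero : M (Fin.last (n+1)) c = 0 := by
      simp only [hM, matT, Matrix.of_apply, Fin.val_last]
      split_ifs <;> first | rfl | omega
    rw [hzero]; ring

set_option maxHeartbeats 2000000 in
lemma detA_decomp (n : ℕ) (ε : ℝ) (x : ℕ → ℝ) :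
    (matA (n+3) ε x).det
      = (matT (n+3) (fun i => -2 * x i)).det
        - ε^2 * (matT (n+1) (fun i => -2 * x (i+1))).det + 2 * ε * (-1)^n := by
  set d : ℕ → ℝ := fun i => -2 * x i with hd
  set T := matT (n+3) d with hT
  set z : Fin (n+3) := 0 with hz
  set l : Fin (n+3) := Fin.last (n+2) with hl
  have hzl : z ≠ l := by simp [hz, hl, Fin.ext_iff]
  set e0 : Fin (n+3) → ℝ := fun j => if (j : ℕ) = 0 then 1 else 0 with he0
  set eJ : Fin (n+3) → ℝ := fun j => if (j : ℕ) = n + 2 then 1 else 0 with heJ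
  set V := T.updateRow l e0 with hV
  -- matA as a double row update of T
  have hA : matA (n+3) ε x
      = (T.updateRow z (T z + ε • eJ)).updateRow l (T l + ε • e0) := by
    ext i j
    have hi := i.isLt
    have hj := j.isLt
    simp only [Matrix.updateRow_apply, matA, matT, hT, hd, hz, hl, he0, heJ, Matrix.of_apply,
      Pi.add_apply, Pi.smul_apply, smul_eq_mul, Fin.ext_iff, Fin.val_zero, Fin.val_last]
    split_ifs <;> first | ring1 | omega | (exfalso; omega) | simp_all
  -- triangular determinant 1 : D1 minor
  have hD1 : (T.updateRow z eJ).det = (-1)^n := by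
    rw [Matrix.det_succ_row_zero]
    rw [Finset.sum_eq_single_of_mem (Fin.last (n+2)) (Finset.mem_univ _)]
    · have hent : (T.updateRow z eJ) 0 (Fin.last (n+2)) = 1 := by
        simp [hz, heJ, Matrix.updateRow_apply, Fin.val_last]
      have hmin : ((T.updateRow z eJ).submatrix Fin.succ (Fin.last (n+2)).succAbove).det = 1 := by
        rw [Matrix.det_of_upperTriangular]
        · apply Finset.prod_eq_one
          intro i _
          simp only [Matrix.submatrix_apply, Fin.succAbove_last]
          rw [Matrix.updateRow_ne (by rw [hz]; exact Fin.succ_ne_zero _)]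
          simp only [hT, matT, Matrix.of_apply, Fin.val_succ, Fin.coe_castSucc]
          split_ifs <;> first | rfl | omega | simp_all
        · intro i j hij
          have hij' : (j : ℕ) < (i : ℕ) := hij
          simp only [Matrix.submatrix_apply, Fin.succAbove_last]
          rw [Matrix.updateRow_ne (by rw [hz]; exact Fin.succ_ne_zero _)]
          simp only [hT, matT, Matrix.of_apply, Fin.val_succ, Fin.coe_castSucc]
          split_ifs <;> first | rfl | omega | simp_all
      rw [hent, hmin, Fin.val_last]
      have : (-1:ℝ)^(n+2) = (-1)^n := by ring
      rw [this]; ring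
    · intro b _ hb
      have hbv : (b : ℕ) ≠ n + 2 := fun h => hb (Fin.ext (by simpa [Fin.val_last] using h))
      have := b.isLt
      have : (T.updateRow z eJ) 0 b = 0 := by
        simp only [hz, Matrix.updateRow_self]  -- (0 : Fin (n+3)) = z
        simp only [heJ]
        split_ifs <;> first | rfl | omega | simp_all
      rw [this]; ring
  -- D2
  have hD2 : V.det = (-1)^n := by
    rw [Matrix.det_succ_row V l]
    rw [Finset.sum_eq_single_of_mem (0 : Fin (n+3)) (Finset.mem_univ _)]
    · have hent : V l 0 = 1 := by simp [hV, he0, Matrix.updateRow_self]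
      have hmin : (V.submatrix l.succAbove (0 : Fin (n+3)).succAbove).det = 1 := by
        rw [Matrix.det_of_lowerTriangular]
        · apply Finset.prod_eq_one
          intro i _
          simp only [hl, Matrix.submatrix_apply, Fin.succAbove_last, Fin.succAbove_zero]
          rw [hV, Matrix.updateRow_ne (Fin.castSucc_lt_last i).ne]
          simp only [hT, matT, Matrix.of_apply, Fin.val_succ, Fin.coe_castSucc]
          split_ifs <;> first | rfl | omega | simp_all
        · intro i j hij
          have hij' : (i : ℕ) < (j : ℕ) := hij
          simp only [hl, Matrix.submatrix_apply, Fin.succAbove_last, Fin.succAbove_zero]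
          rw [hV, Matrix.updateRow_ne (Fin.castSucc_lt_last i).ne]
          simp only [hT, matT, Matrix.of_apply, Fin.val_succ, Fin.coe_castSucc]
          split_ifs <;> first | rfl | omega | simp_all
      rw [hent, hmin, hl, Fin.val_last, Fin.val_zero]
      have : (-1:ℝ)^(n+2+0) = (-1)^n := by ring
      rw [this]; ring
    · intro b _ hb
      have hbv : (b : ℕ) ≠ 0 := fun h => hb (Fin.ext (by simpa using h))
      have : V l b = 0 := by
        simp only [hV, Matrix.updateRow_self, he0]
        split_ifs <;> first | rfl | omega | simp_all
      rw [this]; ring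
  -- D3
  have hD3 : (V.updateRow z eJ).det = -(matT (n+1) (fun i => d (i+1))).det := by
    rw [Matrix.det_succ_row_zero]
    rw [Finset.sum_eq_single_of_mem (Fin.last (n+2)) (Finset.mem_univ _)]
    · have hent : (V.updateRow z eJ) 0 (Fin.last (n+2)) = 1 := by
        simp [hz, heJ, Matrix.updateRow_apply, Fin.val_last]
      set P := (V.updateRow z eJ).submatrix Fin.succ (Fin.last (n+2)).succAbove with hP
      have hPdet : P.det = -((-1)^n * (matT (n+1) (fun i => d (i+1))).det) := by
        rw [Matrix.det_succ_row P (Fin.last (n+1))]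
        rw [Finset.sum_eq_single_of_mem (0 : Fin (n+2)) (Finset.mem_univ _)]
        · have hent2 : P (Fin.last (n+1)) 0 = 1 := by
            simp only [hP, Matrix.submatrix_apply, Fin.succAbove_last]
            have hsl : (Fin.last (n+1)).succ = l := rfl
            rw [hsl, Matrix.updateRow_ne hzl.symm, hV, Matrix.updateRow_self]
            simp [he0]
          have hmin2 : (P.submatrix (Fin.last (n+1)).succAbove (0 : Fin (n+2)).succAbove)
              = matT (n+1) (fun i => d (i+1)) := by
            ext i j
            have hi := i.isLt
            have hj := j.isLt
            simp only [hP, Matrix.submatrix_apply, Fin.succAbove_last, Fin.succAbove_zero]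
            rw [Matrix.updateRow_ne (by rw [hz]; exact Fin.succ_ne_zero _), hV,
              Matrix.updateRow_ne (by simp [hl, Fin.ext_iff, Fin.val_last]; omega)]
            simp only [hT, matT, Matrix.of_apply, Fin.val_succ, Fin.coe_castSucc]
            split_ifs <;> first | rfl | omega | (congr 1; omega) | simp_all
          rw [hent2, hmin2, Fin.val_last, Fin.val_zero]
          have : (-1:ℝ)^(n+1+0) = -(-1)^n := by ring
          rw [this]; ring
        · intro b _ hb
          have hbv : (b : ℕ) ≠ 0 := fun h => hb (Fin.ext (by simpa using h))
          have hb2 := b.isLt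
          have : P (Fin.last (n+1)) b = 0 := by
            simp only [hP, Matrix.submatrix_apply, Fin.succAbove_last]
            have hsl : (Fin.last (n+1)).succ = l := rfl
            rw [hsl, Matrix.updateRow_ne hzl.symm, hV, Matrix.updateRow_self]
            simp only [he0, Fin.coe_castSucc]
            split_ifs <;> first | rfl | omega | simp_all
          rw [this]; ring
      rw [hent, hPdet, Fin.val_last]
      have h10 : (-1:ℝ)^(n+2) * ((-1:ℝ)^n) = 1 := by
        rw [← pow_add]
        exact Even.neg_one_pow ⟨n+1, by ring⟩
      linear_combination (-(matT (n+1) fun i => d (i+1)).det) * h10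
    · intro b _ hb
      have hbv : (b : ℕ) ≠ n + 2 := fun h => hb (Fin.ext (by simpa [Fin.val_last] using h))
      have := b.isLt
      have : (V.updateRow z eJ) 0 b = 0 := by
        simp only [hz, Matrix.updateRow_self, heJ]
        split_ifs <;> first | rfl | omega | simp_all
      rw [this]; ring
  -- assemble
  rw [hA]
  rw [Matrix.det_updateRow_add, Matrix.det_updateRow_smul]
  have h5 : (T.updateRow z (T z + ε • eJ)).updateRow l (T l)
      = T.updateRow z (T z + ε • eJ) := by
    have : T l = (T.updateRow z (T z + ε • eJ)) l := by
      rw [Matrix.updateRow_ne hzl.symm]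
    rw [this, Matrix.updateRow_eq_self]
  have h6 : (T.updateRow z (T z + ε • eJ)).updateRow l e0
      = V.updateRow z (T z + ε • eJ) := by
    ext i j
    by_cases h1 : i = l
    · subst h1
      rw [Matrix.updateRow_self, Matrix.updateRow_ne hzl.symm, hV, Matrix.updateRow_self]
    · rw [Matrix.updateRow_ne h1]
      by_cases h2 : i = z
      · subst h2
        rw [Matrix.updateRow_self, Matrix.updateRow_self]
      · rw [Matrix.updateRow_ne h2, Matrix.updateRow_ne h2, hV, Matrix.updateRow_ne h1]
  rw [h5, h6]
  rw [Matrix.det_updateRow_add, Matrix.det_updateRow_smul, Matrix.updateRow_eq_self]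
  have h7 : V.updateRow z (T z) = V := by
    have : T z = V z := by rw [hV, Matrix.updateRow_ne hzl]
    rw [this, Matrix.updateRow_eq_self]
  rw [Matrix.det_updateRow_add, Matrix.det_updateRow_smul, h7]
  rw [hD1, hD2, hD3]
  ring



def pcover (A : Finset ℕ) : Finset ℕ := A.biUnion fun s => {s, s+1}

def pSet (n : ℕ) : Finset (Finset ℕ) :=
  (Finset.range (n-1)).powerset.filter fun A => ∀ s ∈ A, s + 1 ∉ A

noncomputable def gP (n : ℕ) (x : ℕ → ℝ) : ℝ :=
  ∑ A ∈ pSet n, (-1 : ℝ) ^ A.card * ∏ j ∈ Finset.range n \ pcover A, (-2 * x j)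

lemma pSet_zero : pSet 0 = {∅} := rfl
lemma pSet_one : pSet 1 = {∅} := rfl

lemma gP_zero (x : ℕ → ℝ) : gP 0 x = 1 := by
  simp [gP, pSet_zero]

lemma gP_one (x : ℕ → ℝ) : gP 1 x = -2 * x 0 := by
  simp [gP, pSet_one, pcover]

lemma pcover_subset {A : Finset ℕ} {m : ℕ} (h : A ⊆ Finset.range m) :
    pcover A ⊆ Finset.range (m + 1) := by
  intro j hj
  rw [pcover, Finset.mem_biUnion] at hj
  obtain ⟨s, hs, hj⟩ := hj
  have := Finset.mem_range.mp (h hs)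
  simp only [Finset.mem_insert, Finset.mem_singleton] at hj
  rw [Finset.mem_range]
  omega

lemma gP_rec (n : ℕ) (x : ℕ → ℝ) :
    gP (n+2) x = -2 * x (n+1) * gP (n+1) x - gP n x := by
  have hsplit := Finset.sum_filter_add_sum_filter_not (pSet (n+2)) (fun A => n ∈ A)
    (fun A => (-1 : ℝ) ^ A.card * ∏ j ∈ Finset.range (n+2) \ pcover A, (-2 * x j))
  rw [gP, ← hsplit]
  have h2 : (pSet (n+2)).filter (fun A => ¬ n ∈ A) = pSet (n+1) := by
    ext A
    simp only [Finset.mem_filter, pSet, Finset.mem_powerset]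
    constructor
    · rintro ⟨⟨hsub, hadj⟩, hn⟩
      refine ⟨fun a ha => ?_, hadj⟩
      have := Finset.mem_range.mp (hsub ha)
      have : a ≠ n := fun e => hn (e ▸ ha)
      rw [Finset.mem_range]; omega
    · rintro ⟨hsub, hadj⟩
      refine ⟨⟨fun a ha => ?_, hadj⟩, fun hn => ?_⟩
      · have := Finset.mem_range.mp (hsub ha); rw [Finset.mem_range]; omega
      · have := Finset.mem_range.mp (hsub hn); omega
  have h1 : (pSet (n+2)).filter (fun A => n ∈ A) =
      (pSet n).image (fun B => insert n B) := by
    ext A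
    simp only [Finset.mem_filter, Finset.mem_image, pSet, Finset.mem_powerset]
    constructor
    · rintro ⟨⟨hsub, hadj⟩, hn⟩
      refine ⟨A.erase n, ⟨fun a ha => ?_, fun s hs => ?_⟩, Finset.insert_erase hn⟩
      · have h1 := Finset.mem_of_mem_erase ha
        have h2 := Finset.ne_of_mem_erase ha
        have h3 := Finset.mem_range.mp (hsub h1)
        have h4 : a ≠ n - 1 := by
          intro e
          rcases Nat.eq_zero_or_pos n with h5 | h5
          · omega
          · exact hadj a h1 (by rw [e, Nat.sub_add_cancel h5]; exact hn)
        rw [Finset.mem_range]; omega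
      · intro hs1
        exact hadj s (Finset.mem_of_mem_erase hs) (Finset.mem_of_mem_erase hs1)
    · rintro ⟨B, ⟨hsub, hadj⟩, rfl⟩
      have hBn : ∀ b ∈ B, b < n - 1 := fun b hb => Finset.mem_range.mp (hsub hb)
      refine ⟨⟨fun a ha => ?_, fun s hs hs1 => ?_⟩, Finset.mem_insert_self n B⟩
      · rw [Finset.mem_insert] at ha
        rw [Finset.mem_range]
        rcases ha with rfl | ha
        · omega
        · have := hBn a ha; omega
      · rw [Finset.mem_insert] at hs hs1
        rcases hs with rfl | hs
        · rcases hs1 with h | h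
          · omega
          · have := hBn _ h; omega
        · rcases hs1 with h | h
          · have := hBn _ hs; omega
          · exact hadj s hs h
  rw [h1, h2]
  have hinj : ∀ B₁ ∈ pSet n, ∀ B₂ ∈ pSet n,
      insert n B₁ = insert n B₂ → B₁ = B₂ := by
    intro B₁ h₁ B₂ h₂ he
    have hn₁ : n ∉ B₁ := fun h => by
      have := Finset.mem_range.mp ((Finset.mem_powerset.mp (Finset.mem_filter.mp h₁).1) h); omega
    have hn₂ : n ∉ B₂ := fun h => by
      have := Finset.mem_range.mp ((Finset.mem_powerset.mp (Finset.mem_filter.mp h₂).1) h); omega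
    rw [← Finset.erase_insert hn₁, ← Finset.erase_insert hn₂, he]
  rw [Finset.sum_image hinj]
  have hterm : ∀ B ∈ pSet n,
      (-1 : ℝ) ^ (insert n B).card * ∏ j ∈ Finset.range (n+2) \ pcover (insert n B), (-2 * x j)
      = -((-1 : ℝ) ^ B.card * ∏ j ∈ Finset.range n \ pcover B, (-2 * x j)) := by
    intro B hB
    obtain ⟨hsub', hadj'⟩ := Finset.mem_filter.mp hB
    have hsub := Finset.mem_powerset.mp hsub'
    have hn : n ∉ B := fun h => by have := Finset.mem_range.mp (hsub h); omega
    have hcard : (insert n B).card = B.card + 1 := Finset.card_insert_of_notMem hn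
    have hcov : pcover (insert n B) = insert n (insert (n+1) (pcover B)) := by
      rw [pcover, Finset.biUnion_insert]
      ext j
      simp only [Finset.mem_union, Finset.mem_insert, Finset.mem_singleton, pcover]
      tauto
    have hset : Finset.range (n+2) \ pcover (insert n B) = Finset.range n \ pcover B := by
      rw [hcov]
      ext j
      simp only [Finset.mem_sdiff, Finset.mem_range, Finset.mem_insert]
      constructor
      · rintro ⟨h1, h2⟩
        push_neg at h2
        exact ⟨by omega, h2.2.2⟩
      · rintro ⟨h1, h2⟩
        have hjc : j ∉ pcover B := h2
        exact ⟨by omega, by push_neg; exact ⟨by omega, by omega, h2⟩⟩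
    rw [hcard, hset, pow_succ]
    ring
  rw [Finset.sum_congr rfl hterm]
  have hterm2 : ∀ A ∈ pSet (n+1),
      (-1 : ℝ) ^ A.card * ∏ j ∈ Finset.range (n+2) \ pcover A, (-2 * x j)
      = (-2 * x (n+1)) * ((-1 : ℝ) ^ A.card * ∏ j ∈ Finset.range (n+1) \ pcover A, (-2 * x j)) := by
    intro A hA
    obtain ⟨hsub', hadj'⟩ := Finset.mem_filter.mp hA
    have hsub := Finset.mem_powerset.mp hsub'
    have hcov := pcover_subset hsub
    have hset : Finset.range (n+2) \ pcover A
        = insert (n+1) (Finset.range (n+1) \ pcover A) := by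
      ext j
      simp only [Finset.mem_sdiff, Finset.mem_range, Finset.mem_insert]
      constructor
      · rintro ⟨h1, h2⟩
        by_cases hj : j = n + 1
        · exact Or.inl hj
        · exact Or.inr ⟨by omega, h2⟩
      · rintro (rfl | ⟨h1, h2⟩)
        · refine ⟨by omega, fun h => ?_⟩
          have := Finset.mem_range.mp (hcov h)
          omega
        · exact ⟨by omega, h2⟩
    have hnotmem : (n+1) ∉ Finset.range (n+1) \ pcover A := by
      simp [Finset.mem_sdiff]
    rw [hset, Finset.prod_insert hnotmem]
    ring
  rw [Finset.sum_congr rfl hterm2, ← Finset.mul_sum, ← gP, Finset.sum_neg_distrib, ← gP]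
  ring

def ccover (J : ℕ) (A : Finset ℕ) : Finset ℕ := A.biUnion fun s => cycEdge J s
def cSet (J : ℕ) : Finset (Finset ℕ) :=
  (Finset.range J).powerset.filter fun A => ∀ s ∈ A, (s + 1) % J ∉ A
noncomputable def gC (J : ℕ) (x : ℕ → ℝ) : ℝ :=
  ∑ A ∈ cSet J, (-1 : ℝ) ^ A.card * ∏ j ∈ Finset.range J \ ccover J A, (-2 * x j)

lemma gC_eq (n : ℕ) (x : ℕ → ℝ) :
    gC (n+3) x = gP (n+3) x - gP (n+1) (fun i => x (i+1)) := by
  have hsplit := Finset.sum_filter_add_sum_filter_not (cSet (n+3)) (fun A => (n+2) ∈ A)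
    (fun A => (-1 : ℝ) ^ A.card * ∏ j ∈ Finset.range (n+3) \ ccover (n+3) A, (-2 * x j))
  rw [gC, ← hsplit]
  -- Part without the wrap-around edge
  have h2 : (cSet (n+3)).filter (fun A => ¬ (n+2) ∈ A) = pSet (n+3) := by
    ext A
    simp only [Finset.mem_filter, cSet, pSet, Finset.mem_powerset]
    constructor
    · rintro ⟨⟨hsub, hadj⟩, hn⟩
      have hsub' : ∀ a ∈ A, a < n + 2 := by
        intro a ha
        have := Finset.mem_range.mp (hsub ha)
        have : a ≠ n + 2 := fun e => hn (e ▸ ha)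
        omega
      refine ⟨fun a ha => Finset.mem_range.mpr (by have := hsub' a ha; omega), fun s hs h1 => ?_⟩
      have := hsub' s hs
      exact hadj s hs (by rwa [Nat.mod_eq_of_lt (by omega)])
    · rintro ⟨hsub, hadj⟩
      have hsub' : ∀ a ∈ A, a < n + 2 := by
        intro a ha
        have := Finset.mem_range.mp (hsub ha); omega
      refine ⟨⟨fun a ha => Finset.mem_range.mpr (by have := hsub' a ha; omega),
        fun s hs h1 => ?_⟩, fun hn => by have := hsub' _ hn; omega⟩
      have := hsub' s hs
      rw [Nat.mod_eq_of_lt (by omega)] at h1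
      exact hadj s hs h1
  have hpart2 : ∑ A ∈ (cSet (n+3)).filter (fun A => ¬ (n+2) ∈ A),
      (-1 : ℝ) ^ A.card * ∏ j ∈ Finset.range (n+3) \ ccover (n+3) A, (-2 * x j)
      = gP (n+3) x := by
    rw [h2, gP]
    apply Finset.sum_congr rfl
    intro A hA
    obtain ⟨hsub', hadj⟩ := Finset.mem_filter.mp hA
    have hsub := Finset.mem_powerset.mp hsub'
    have hcov : ccover (n+3) A = pcover A := by
      rw [ccover, pcover]
      apply Finset.biUnion_congr rfl
      intro s hs
      have := Finset.mem_range.mp (hsub hs)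
      rw [cycEdge, Nat.mod_eq_of_lt (by omega)]
    rw [hcov]
  -- Part with the wrap-around edge
  have h1 : (cSet (n+3)).filter (fun A => (n+2) ∈ A)
      = (pSet (n+1)).image (fun B => insert (n+2) (B.image (· + 1))) := by
    ext A
    simp only [Finset.mem_filter, cSet, pSet, Finset.mem_powerset, Finset.mem_image]
    constructor
    · rintro ⟨⟨hsub, hadj⟩, hn⟩
      have h0 : 0 ∉ A := by
        have := hadj (n+2) hn
        rwa [Nat.mod_self] at this
      have hn1 : (n+1) ∉ A := by
        intro h
        have := hadj (n+1) h
        rw [Nat.mod_eq_of_lt (by omega)] at this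
        exact this hn
      have hbound : ∀ a ∈ A, a ≠ n + 2 → 1 ≤ a ∧ a ≤ n := by
        intro a ha hne
        have h3 := Finset.mem_range.mp (hsub ha)
        have : a ≠ 0 := fun e => h0 (e ▸ ha)
        have : a ≠ n+1 := fun e => hn1 (e ▸ ha)
        omega
      refine ⟨(A.erase (n+2)).image (· - 1), ⟨?_, ?_⟩, ?_⟩
      · intro b hb
        obtain ⟨a, ha, rfl⟩ := Finset.mem_image.mp hb
        have h3 := hbound a (Finset.mem_of_mem_erase ha) (Finset.ne_of_mem_erase ha)
        exact Finset.mem_range.mpr (by omega)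
      · intro s hs hs1
        obtain ⟨a, ha, rfl⟩ := Finset.mem_image.mp hs
        obtain ⟨a', ha', he⟩ := Finset.mem_image.mp hs1
        have h3 := hbound a (Finset.mem_of_mem_erase ha) (Finset.ne_of_mem_erase ha)
        have h4 := hbound a' (Finset.mem_of_mem_erase ha') (Finset.ne_of_mem_erase ha')
        have : a' = a + 1 := by omega
        subst this
        have := hadj a (Finset.mem_of_mem_erase ha)
        rw [Nat.mod_eq_of_lt (by omega)] at this
        exact this (Finset.mem_of_mem_erase ha')
      · ext a
        simp only [Finset.mem_insert, Finset.mem_image]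
        constructor
        · rintro (rfl | ⟨b, hb, rfl⟩)
          · exact hn
          · obtain ⟨a, ha, rfl⟩ := hb
            have h3 := hbound a (Finset.mem_of_mem_erase ha) (Finset.ne_of_mem_erase ha)
            have h4 : a - 1 + 1 = a := by omega
            rw [h4]
            exact Finset.mem_of_mem_erase ha
        · intro ha
          by_cases he : a = n + 2
          · exact Or.inl he
          · refine Or.inr ⟨a - 1, ⟨a, Finset.mem_erase.mpr ⟨he, ha⟩, rfl⟩, ?_⟩
            have := hbound a ha he
            omega
    · rintro ⟨B, ⟨hsub, hadj⟩, rfl⟩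
      have hBb : ∀ b ∈ B, b < n := fun b hb => Finset.mem_range.mp (hsub hb)
      have hmem : ∀ a, a ∈ insert (n+2) (B.image (· + 1)) ↔
          a = n + 2 ∨ ∃ b ∈ B, b + 1 = a := by
        intro a
        simp [Finset.mem_insert, Finset.mem_image]
      refine ⟨⟨?_, ?_⟩, Finset.mem_insert_self _ _⟩
      · intro a ha
        rw [hmem] at ha
        rcases ha with rfl | ⟨b, hb, rfl⟩
        · exact Finset.mem_range.mpr (by omega)
        · exact Finset.mem_range.mpr (by have := hBb b hb; omega)
      · intro s hs h1
        rw [hmem] at hs h1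
        rcases hs with rfl | ⟨b, hb, rfl⟩
        · rw [Nat.mod_self] at h1
          rcases h1 with h | ⟨b, hb, hb1⟩
          · omega
          · omega
        · have hblt := hBb b hb
          rw [Nat.mod_eq_of_lt (by omega)] at h1
          rcases h1 with h | ⟨b', hb', hb1⟩
          · omega
          · have : b' = b + 1 := by omega
            subst this
            exact hadj b hb hb'
  rw [h1]
  have hni : ∀ B, B ∈ pSet (n+1) → (n+2) ∉ B.image (· + 1) := by
    intro B hB h
    obtain ⟨b, hb, hb1⟩ := Finset.mem_image.mp h
    have hsub := Finset.mem_powerset.mp (Finset.mem_filter.mp hB).1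
    have := Finset.mem_range.mp (hsub hb)
    omega
  have hinj : ∀ B₁ ∈ pSet (n+1), ∀ B₂ ∈ pSet (n+1),
      insert (n+2) (B₁.image (· + 1)) = insert (n+2) (B₂.image (· + 1)) → B₁ = B₂ := by
    intro B₁ h₁ B₂ h₂ he
    have h3 := congrArg (fun S => Finset.erase S (n+2)) he
    simp only at h3
    rw [Finset.erase_insert (hni B₁ h₁), Finset.erase_insert (hni B₂ h₂)] at h3
    exact Finset.image_injective (add_left_injective 1) h3
  rw [Finset.sum_image hinj]
  have hterm : ∀ B ∈ pSet (n+1),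
      (-1:ℝ)^(insert (n+2) (B.image (· + 1))).card *
        ∏ j ∈ Finset.range (n+3) \ ccover (n+3) (insert (n+2) (B.image (· + 1))), (-2 * x j)
      = -((-1:ℝ)^B.card * ∏ i ∈ Finset.range (n+1) \ pcover B, (-2 * x (i+1))) := by
    intro B hB
    have hsub := Finset.mem_powerset.mp (Finset.mem_filter.mp hB).1
    have hBb : ∀ b ∈ B, b < n := fun b hb => Finset.mem_range.mp (hsub hb)
    have hcard : (insert (n+2) (B.image (· + 1))).card = B.card + 1 := by
      rw [Finset.card_insert_of_notMem (hni B hB),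
        Finset.card_image_of_injective _ (add_left_injective 1)]
    have hset : Finset.range (n+3) \ ccover (n+3) (insert (n+2) (B.image (· + 1)))
        = (Finset.range (n+1) \ pcover B).image (· + 1) := by
      have hcov : ∀ j, j ∈ ccover (n+3) (insert (n+2) (B.image (· + 1))) ↔
          (j = n+2 ∨ j = 0 ∨ ∃ b ∈ B, j = b+1 ∨ j = b+2) := by
        intro j
        rw [ccover]
        simp only [Finset.mem_biUnion, Finset.mem_insert, Finset.mem_image, cycEdge,
          Finset.mem_singleton]
        constructor
        · rintro ⟨s, hs, hj⟩
          rcases hs with rfl | ⟨b, hb, rfl⟩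
          · rw [Nat.mod_self] at hj
            rcases hj with rfl | rfl
            · exact Or.inl rfl
            · exact Or.inr (Or.inl rfl)
          · have := hBb b hb
            rw [Nat.mod_eq_of_lt (by omega)] at hj
            exact Or.inr (Or.inr ⟨b, hb, by tauto⟩)
        · rintro (rfl | rfl | ⟨b, hb, rfl | rfl⟩)
          · exact ⟨n+2, Or.inl rfl, Or.inl rfl⟩
          · exact ⟨n+2, Or.inl rfl, Or.inr (by rw [Nat.mod_self])⟩
          · exact ⟨b+1, Or.inr ⟨b, hb, rfl⟩, Or.inl rfl⟩
          · refine ⟨b+1, Or.inr ⟨b, hb, rfl⟩, Or.inr ?_⟩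
            have := hBb b hb
            rw [Nat.mod_eq_of_lt (by omega)]
      ext j
      simp only [Finset.mem_sdiff, Finset.mem_range, Finset.mem_image, hcov]
      constructor
      · rintro ⟨hj1, hj2⟩
        push_neg at hj2
        obtain ⟨hne2, hne0, hnb⟩ := hj2
        refine ⟨j - 1, ⟨by omega, fun hc => ?_⟩, by omega⟩
        rw [pcover, Finset.mem_biUnion] at hc
        obtain ⟨b, hb, hjb⟩ := hc
        simp only [Finset.mem_insert, Finset.mem_singleton] at hjb
        have := hBb b hb
        rcases hjb with h | h
        · exact (hnb b hb).1 (by omega)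
        · exact (hnb b hb).2 (by omega)
      · rintro ⟨i, ⟨hi1, hi2⟩, rfl⟩
        refine ⟨by omega, ?_⟩
        push_neg
        refine ⟨by omega, by omega, fun b hb => ?_⟩
        have := hBb b hb
        constructor
        · intro h
          refine hi2 ?_
          rw [pcover, Finset.mem_biUnion]
          exact ⟨b, hb, by simp only [Finset.mem_insert, Finset.mem_singleton]; omega⟩
        · intro h
          refine hi2 ?_
          rw [pcover, Finset.mem_biUnion]
          exact ⟨b, hb, by simp only [Finset.mem_insert, Finset.mem_singleton]; omega⟩
    rw [hcard, hset, Finset.prod_image (by intro a _ b _ h; simp only at h; omega), pow_succ]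
    ring
  rw [Finset.sum_congr rfl hterm, Finset.sum_neg_distrib, hpart2]
  have hgp : ∑ B ∈ pSet (n+1), ((-1:ℝ)^B.card * ∏ i ∈ Finset.range (n+1) \ pcover B,
      (-2 * x (i+1))) = gP (n+1) (fun i => x (i+1)) := by
    rw [gP]
  rw [hgp]
  ring

lemma cycEdge_card {J s : ℕ} (hJ : 2 ≤ J) (hs : s < J) : (cycEdge J s).card = 2 := by
  rw [cycEdge, Finset.card_insert_of_notMem, Finset.card_singleton]
  simp only [Finset.mem_singleton]
  rcases Nat.lt_or_ge (s+1) J with h | h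
  · rw [Nat.mod_eq_of_lt h]; omega
  · have : s + 1 = J := by omega
    rw [this, Nat.mod_self]; omega

lemma cycEdge_subset {J s : ℕ} (hs : s < J) : cycEdge J s ⊆ Finset.range J := by
  intro a ha
  rw [cycEdge, Finset.mem_insert, Finset.mem_singleton] at ha
  rcases ha with rfl | rfl
  · exact Finset.mem_range.mpr hs
  · exact Finset.mem_range.mpr (Nat.mod_lt _ (by omega))

lemma ccover_subset {J : ℕ} {A : Finset ℕ} (h : A ⊆ Finset.range J) :
    ccover J A ⊆ Finset.range J := by
  intro a ha
  rw [ccover, Finset.mem_biUnion] at ha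
  obtain ⟨s, hs, ha⟩ := ha
  exact cycEdge_subset (Finset.mem_range.mp (h hs)) ha

lemma cyc_disjoint {J : ℕ} (hJ : 2 ≤ J) {A : Finset ℕ} (hsub : A ⊆ Finset.range J)
    (hadj : ∀ s ∈ A, (s + 1) % J ∉ A) :
    ∀ s ∈ A, ∀ t ∈ A, s ≠ t → Disjoint (cycEdge J s) (cycEdge J t) := by
  intro s hs t ht hst
  have hsJ := Finset.mem_range.mp (hsub hs)
  have htJ := Finset.mem_range.mp (hsub ht)
  rw [Finset.disjoint_left]
  intro a has hat
  rw [cycEdge, Finset.mem_insert, Finset.mem_singleton] at has hat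
  have hmod : ∀ u, u < J → (u + 1) % J = if u + 1 = J then 0 else u + 1 := by
    intro u hu
    split_ifs with h
    · rw [h, Nat.mod_self]
    · rw [Nat.mod_eq_of_lt (by omega)]
  rcases has with rfl | rfl
  · rcases hat with h | h
    · exact hst h
    · -- s = (t+1) % J, so t's successor is s ∈ A
      exact hadj t ht (h ▸ hs)
  · rcases hat with h | h
    · exact hadj s hs (h ▸ ht)
    · -- (s+1)%J = (t+1)%J → s = t
      rw [hmod s hsJ, hmod t htJ] at h
      split_ifs at h <;> omega
lemma ccover_card {J : ℕ} (hJ : 2 ≤ J) {A : Finset ℕ} (hsub : A ⊆ Finset.range J)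
    (hadj : ∀ s ∈ A, (s + 1) % J ∉ A) : (ccover J A).card = 2 * A.card := by
  rw [ccover, Finset.card_biUnion (cyc_disjoint hJ hsub hadj)]
  rw [Finset.sum_congr rfl fun s hs => cycEdge_card hJ (Finset.mem_range.mp (hsub hs))]
  rw [Finset.sum_const, smul_eq_mul]
  ring

lemma card_le {J : ℕ} (hJ : 2 ≤ J) {A : Finset ℕ} (hA : A ∈ cSet J) : 2 * A.card ≤ J := by
  obtain ⟨hsub', hadj⟩ := Finset.mem_filter.mp hA
  have hsub := Finset.mem_powerset.mp hsub'
  have h1 := ccover_card hJ hsub hadj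
  have h2 := Finset.card_le_card (ccover_subset hsub)
  rw [Finset.card_range] at h2
  omega

lemma fiber_eq (J k : ℕ) (hJ : 2 ≤ J) :
    (cSet J).filter (fun A => J - 2 * A.card = k) = edgeCollections J k := by
  ext A
  simp only [Finset.mem_filter, cSet, edgeCollections, Finset.mem_powerset]
  constructor
  · rintro ⟨⟨hsub', hadj⟩, hk⟩
    have hle := card_le hJ (Finset.mem_filter.mpr ⟨Finset.mem_powerset.mpr hsub', hadj⟩)
    have hcc := ccover_card hJ hsub' hadj
    rw [ccover] at hcc
    exact ⟨hsub', by omega, by omega⟩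
  · rintro ⟨hsub, hcov, hcard⟩
    refine ⟨⟨hsub, ?_⟩, by omega⟩
    -- nonadjacency from the cover cardinality
    by_contra hbad
    push_neg at hbad
    obtain ⟨s, hs, hs1⟩ := hbad
    have hsJ := Finset.mem_range.mp (hsub hs)
    have hne : s ≠ (s+1) % J := by
      rcases Nat.lt_or_ge (s+1) J with h | h
      · rw [Nat.mod_eq_of_lt h]; omega
      · have : s + 1 = J := by omega
        rw [this, Nat.mod_self]; omega
    -- cover is too small
    have hA : A = insert s (A.erase s) := (Finset.insert_erase hs).symm
    have hcovsplit : (A.biUnion fun t => cycEdge J t)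
        = cycEdge J s ∪ ((A.erase s).biUnion fun t => cycEdge J t) := by
      conv_lhs => rw [hA]
      rw [Finset.biUnion_insert]
    have hmem : (s+1) % J ∈ (A.erase s).biUnion fun t => cycEdge J t := by
      rw [Finset.mem_biUnion]
      refine ⟨(s+1) % J, Finset.mem_erase.mpr ⟨fun h => hne h.symm, hs1⟩, ?_⟩
      rw [cycEdge]
      exact Finset.mem_insert_self _ _
    have hsmall : (cycEdge J s \ ((A.erase s).biUnion fun t => cycEdge J t)).card ≤ 1 := by
      have h1 : cycEdge J s \ ((A.erase s).biUnion fun t => cycEdge J t) ⊆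
          cycEdge J s \ {(s+1) % J} := by
        intro a ha
        rw [Finset.mem_sdiff] at ha ⊢
        refine ⟨ha.1, fun h => ha.2 (by rwa [Finset.mem_singleton.mp h])⟩
      have h2 := Finset.card_le_card h1
      have h3 : (cycEdge J s \ {(s+1) % J}).card ≤ 1 := by
        have h4 : cycEdge J s \ {(s+1) % J} ⊆ {s} := by
          intro a ha
          simp only [Finset.mem_sdiff, cycEdge, Finset.mem_insert,
            Finset.mem_singleton] at ha ⊢
          tauto
        simpa using Finset.card_le_card h4
      omega
    have hub : ((A.erase s).biUnion fun t => cycEdge J t).card ≤ 2 * (A.card - 1) := by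
      have := Finset.card_biUnion_le_card_mul (A.erase s) (fun t => cycEdge J t) 2 ?_
      · rw [Finset.card_erase_of_mem hs] at this
        omega
      · intro t ht
        have := Finset.mem_range.mp (hsub (Finset.mem_of_mem_erase ht))
        exact le_of_eq (cycEdge_card hJ this)
    have hcards : (A.biUnion fun t => cycEdge J t).card ≤ 2 * A.card - 1 := by
      rw [hcovsplit]
      have := Finset.card_union_le (cycEdge J s) ((A.erase s).biUnion fun t => cycEdge J t)
      have hcup : (cycEdge J s ∪ ((A.erase s).biUnion fun t => cycEdge J t)).card
          ≤ (cycEdge J s \ ((A.erase s).biUnion fun t => cycEdge J t)).card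
            + ((A.erase s).biUnion fun t => cycEdge J t).card := by
        rw [Finset.card_sdiff_add_card]
      have hApos : 1 ≤ A.card := Finset.card_pos.mpr ⟨s, hs⟩
      omega
    have hx : (A.biUnion fun t => cycEdge J t).card + k = J := hcov
    have hApos : 1 ≤ A.card := Finset.card_pos.mpr ⟨s, hs⟩
    omega

lemma uncov_card {J k : ℕ} {A : Finset ℕ} (hA : A ∈ edgeCollections J k) :
    (Finset.range J \ (A.biUnion fun s => cycEdge J s)).card = k := by
  obtain ⟨hsub', ⟨hcov, hcard⟩⟩ := Finset.mem_filter.mp hA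
  have hsub := Finset.mem_powerset.mp hsub'
  have hss : (A.biUnion fun s => cycEdge J s) ⊆ Finset.range J := ccover_subset hsub
  rw [Finset.card_sdiff_of_subset hss, Finset.card_range]
  omega

lemma parity_empty {J k : ℕ} (h : k % 2 ≠ J % 2) : edgeCollections J k = ∅ := by
  apply Finset.eq_empty_of_forall_notMem
  intro A hA
  obtain ⟨_, ⟨_, hcard⟩⟩ := Finset.mem_filter.mp hA
  omega

lemma fJk_parity {J k : ℕ} (x : ℕ → ℝ) (h : k % 2 ≠ J % 2) : fJk J k x = 0 := by
  rw [fJk, parity_empty h, Finset.sum_empty]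

lemma gC_fiber (J : ℕ) (hJ : 2 ≤ J) (x : ℕ → ℝ) :
    gC J x = ∑ k ∈ Finset.range (J+1), (-1:ℝ)^((J-k)/2) * (-2)^k * fJk J k x := by
  rw [gC]
  rw [← Finset.sum_fiberwise_of_maps_to (g := fun A => J - 2 * A.card)
    (t := Finset.range (J+1)) (fun A hA => by simp only [Finset.mem_range]; omega)]
  apply Finset.sum_congr rfl
  intro k hk
  rw [fiber_eq J k hJ, fJk, Finset.mul_sum]
  apply Finset.sum_congr rfl
  intro A hA
  obtain ⟨hsub', ⟨hcov, hcard⟩⟩ := Finset.mem_filter.mp hA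
  have h1 : A.card = (J - k) / 2 := by omega
  have h2 : ∏ j ∈ Finset.range J \ (A.biUnion fun s => cycEdge J s), (-2 * x j)
      = (-2:ℝ)^k * ∏ j ∈ Finset.range J \ (A.biUnion fun s => cycEdge J s), x j := by
    rw [Finset.prod_mul_distrib, Finset.prod_const, uncov_card hA]
  simp only [ccover]
  rw [h2, h1]
  ring

lemma perfect_eq (J : ℕ) (hJ : 2 ≤ J) (hJe : J % 2 = 0) :
    edgeCollections J 0 = {(Finset.range J).filter (fun j => j % 2 = 0),
      (Finset.range J).filter (fun j => j % 2 = 1)} := by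
  ext A
  constructor
  · intro hA
    have hA' := hA
    rw [← fiber_eq J 0 hJ, Finset.mem_filter] at hA'
    obtain ⟨hcset, hk⟩ := hA'
    obtain ⟨hsub', hadj⟩ := Finset.mem_filter.mp hcset
    have hsub := Finset.mem_powerset.mp hsub'
    have hle := card_le hJ hcset
    have hcard : 2 * A.card = J := by omega
    obtain ⟨_, ⟨hcov, _⟩⟩ := Finset.mem_filter.mp hA
    -- the cover is everything
    have hcsub : (A.biUnion fun s => cycEdge J s) ⊆ Finset.range J := ccover_subset hsub
    have hcovall : (A.biUnion fun s => cycEdge J s) = Finset.range J := by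
      apply Finset.eq_of_subset_of_card_le hcsub
      rw [Finset.card_range]
      omega
    have hcovmem : ∀ j, j < J → ∃ s ∈ A, j ∈ cycEdge J s := by
      intro j hj
      have : j ∈ (A.biUnion fun s => cycEdge J s) := hcovall ▸ Finset.mem_range.mpr hj
      exact Finset.mem_biUnion.mp this
    have claim0 : ∀ j, j + 1 < J → (j + 1 ∈ A ↔ j ∉ A) := by
      intro j hj
      constructor
      · intro h1 h2
        have := hadj j h2
        rw [Nat.mod_eq_of_lt hj] at this
        exact this h1
      · intro h1
        obtain ⟨s, hs, hmem⟩ := hcovmem (j+1) hj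
        have hsJ := Finset.mem_range.mp (hsub hs)
        rw [cycEdge, Finset.mem_insert, Finset.mem_singleton] at hmem
        rcases hmem with rfl | h
        · exact hs
        · rcases Nat.lt_or_ge (s+1) J with h2 | h2
          · rw [Nat.mod_eq_of_lt h2] at h
            have : s = j := by omega
            exact absurd (this ▸ hs) h1
          · have : s + 1 = J := by omega
            rw [this, Nat.mod_self] at h
            omega
    have claim : ∀ j, j < J → (j ∈ A ↔ (j % 2 = 0 ↔ 0 ∈ A)) := by
      intro j
      induction j with
      | zero => intro _; simp
      | succ j ih =>
        intro hj
        have h1 := claim0 j hj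
        have h2 := ih (by omega)
        have h3 : (j+1) % 2 = if j % 2 = 0 then 1 else 0 := by
          split_ifs with hh <;> omega
        by_cases hP : 0 ∈ A <;> rcases Nat.mod_two_eq_zero_or_one j with h | h <;>
          simp [h, hP, h3] at h1 h2 ⊢ <;> tauto
    simp only [Finset.mem_insert, Finset.mem_singleton]
    by_cases hP : 0 ∈ A
    · left
      ext j
      simp only [Finset.mem_filter, Finset.mem_range]
      constructor
      · intro hjA
        have hjJ := Finset.mem_range.mp (hsub hjA)
        exact ⟨hjJ, ((claim j hjJ).mp hjA).mpr hP⟩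
      · rintro ⟨hjJ, hje⟩
        exact (claim j hjJ).mpr (by tauto)
    · right
      ext j
      simp only [Finset.mem_filter, Finset.mem_range]
      constructor
      · intro hjA
        have hjJ := Finset.mem_range.mp (hsub hjA)
        have := (claim j hjJ).mp hjA
        refine ⟨hjJ, ?_⟩
        rcases Nat.mod_two_eq_zero_or_one j with h | h
        · exact absurd (this.mp h) hP
        · exact h
      · rintro ⟨hjJ, hjo⟩
        refine (claim j hjJ).mpr ?_
        constructor
        · intro h; omega
        · intro h; exact absurd h hP
  · intro hA
    simp only [Finset.mem_insert, Finset.mem_singleton] at hA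
    -- both candidates are perfect matchings
    have key : ∀ r : ℕ, r < 2 → (Finset.range J).filter (fun j => j % 2 = r)
        ∈ edgeCollections J 0 := by
      intro r hr
      set E := (Finset.range J).filter (fun j => j % 2 = r) with hE
      have hsub : E ⊆ Finset.range J := Finset.filter_subset _ _
      have hcardE : E.card = J / 2 := by
        have himg : E = (Finset.range (J/2)).image (fun i => 2 * i + r) := by
          ext j
          simp only [hE, Finset.mem_filter, Finset.mem_range, Finset.mem_image]
          constructor
          · rintro ⟨h1, h2⟩
            exact ⟨j / 2, by omega, by omega⟩
          · rintro ⟨i, h1, rfl⟩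
            omega
        rw [himg, Finset.card_image_of_injective _ (fun a b h => by omega),
          Finset.card_range]
      have hcovall : (E.biUnion fun s => cycEdge J s) = Finset.range J := by
        apply Finset.Subset.antisymm (ccover_subset hsub)
        intro j hj
        have hjJ := Finset.mem_range.mp hj
        refine Finset.mem_biUnion.mpr ?_
        by_cases hjr : j % 2 = r
        · exact ⟨j, Finset.mem_filter.mpr ⟨hj, hjr⟩, Finset.mem_insert_self _ _⟩
        · by_cases hj0 : j = 0
          · refine ⟨J - 1, Finset.mem_filter.mpr ⟨Finset.mem_range.mpr (by omega), by omega⟩, ?_⟩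
            rw [cycEdge, Finset.mem_insert, Finset.mem_singleton]
            right
            have : J - 1 + 1 = J := by omega
            rw [this, Nat.mod_self, hj0]
          · refine ⟨j - 1, Finset.mem_filter.mpr ⟨Finset.mem_range.mpr (by omega), by omega⟩, ?_⟩
            rw [cycEdge, Finset.mem_insert, Finset.mem_singleton]
            right
            have : j - 1 + 1 = j := by omega
            rw [this, Nat.mod_eq_of_lt hjJ]
      rw [edgeCollections, Finset.mem_filter, Finset.mem_powerset]
      refine ⟨hsub, ?_, by omega⟩
      rw [hcovall, Finset.card_range]
      omega
    rcases hA with rfl | rfl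
    · exact key 0 (by omega)
    · exact key 1 (by omega)

lemma fJk_zero (J : ℕ) (hJ : 2 ≤ J) (hJe : J % 2 = 0) (x : ℕ → ℝ) : fJk J 0 x = 2 := by
  rw [fJk]
  have hterm : ∀ A ∈ edgeCollections J 0,
      (∏ j ∈ Finset.range J \ (A.biUnion fun s => cycEdge J s), x j) = 1 := by
    intro A hA
    have := uncov_card hA
    rw [Finset.card_eq_zero.mp this, Finset.prod_empty]
  rw [Finset.sum_congr rfl hterm, Finset.sum_const, perfect_eq J hJ hJe]
  rw [Finset.card_insert_of_notMem, Finset.card_singleton]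
  · simp
  · simp only [Finset.mem_singleton]
    intro h
    have h0 : (0:ℕ) ∈ (Finset.range J).filter (fun j => j % 2 = 0) :=
      Finset.mem_filter.mpr ⟨Finset.mem_range.mpr (by omega), by omega⟩
    rw [h, Finset.mem_filter] at h0
    omega


lemma detT_eq_gP : ∀ (n : ℕ) (x : ℕ → ℝ), (matT n (fun i => -2 * x i)).det = gP n x := by
  intro n
  induction n using Nat.strong_induction_on with
  | _ n ih =>
    match n with
    | 0 => intro x; rw [detT_zero, gP_zero]
    | 1 => intro x; rw [detT_one, gP_one]
    | (m+2) =>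
      intro x
      rw [detT_rec, gP_rec, ih m (by omega), ih (m+1) (by omega)]

lemma detA_eq_gC (n : ℕ) (ε : ℝ) (hε : ε = 1 ∨ ε = -1) (x : ℕ → ℝ) :
    (matA (n+3) ε x).det = gC (n+3) x + 2 * ε * (-1)^n := by
  have h1 := detT_eq_gP (n+3) x
  have h2 := detT_eq_gP (n+1) (fun i => x (i+1))
  rw [detA_decomp, h1, h2, gC_eq]
  rcases hε with rfl | rfl <;> ring

lemma even_main (J : ℕ) (hJ : 2 ≤ J) (hJe : J % 2 = 0) (σ : ℝ) (hσ : σ = (-1:ℝ)^(J/2))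
    (x : ℕ → ℝ) :
    σ * gC J x = 2 + ∑ k ∈ (Finset.range (J + 1)).filter (fun k => 2 ≤ k ∧ k % 2 = 0),
      (-4 : ℝ) ^ (k / 2) * fJk J k x := by
  have hsplit := Finset.sum_filter_add_sum_filter_not (Finset.range (J+1))
    (fun k => 2 ≤ k ∧ k % 2 = 0)
    (fun k => σ * ((-1:ℝ)^((J-k)/2) * (-2)^k * fJk J k x))
  have hstep : σ * gC J x
      = ∑ k ∈ Finset.range (J+1), σ * ((-1:ℝ)^((J-k)/2) * (-2)^k * fJk J k x) := by
    rw [gC_fiber J hJ x, Finset.mul_sum]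
  rw [hstep, ← hsplit]
  have hP : ∀ k ∈ (Finset.range (J+1)).filter (fun k => 2 ≤ k ∧ k % 2 = 0),
      σ * ((-1:ℝ)^((J-k)/2) * (-2)^k * fJk J k x) = (-4:ℝ)^(k/2) * fJk J k x := by
    intro k hk
    have hk' := Finset.mem_filter.mp hk
    have hk1 := Finset.mem_range.mp hk'.1
    have hk2 := hk'.2.1
    have hk3 := hk'.2.2
    have h1 : σ * (-1:ℝ)^((J-k)/2) = (-1:ℝ)^(k/2) := by
      rw [hσ, ← pow_add]
      have he : J/2 + (J-k)/2 = 2*((J-k)/2) + k/2 := by omega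
      rw [he, pow_add, pow_mul]
      norm_num
    have h2 : (-2:ℝ)^k = 4^(k/2) := by
      rw [show k = 2*(k/2) by omega, pow_mul]
      norm_num
    have h3 : (-4:ℝ)^(k/2) = (-1:ℝ)^(k/2) * 4^(k/2) := by
      rw [show (-4:ℝ) = -1 * 4 by norm_num, mul_pow]
    rw [h3, ← h1, ← h2]
    ring
  have hQ : ∀ k ∈ (Finset.range (J+1)).filter (fun k => ¬(2 ≤ k ∧ k % 2 = 0)),
      σ * ((-1:ℝ)^((J-k)/2) * (-2)^k * fJk J k x) = if k = 0 then 2 else 0 := by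
    intro k hk
    obtain ⟨hk1, hk2⟩ := Finset.mem_filter.mp hk
    have hk1 := Finset.mem_range.mp hk1
    by_cases h0 : k = 0
    · subst h0
      rw [if_pos rfl, fJk_zero J hJ hJe x, hσ, Nat.sub_zero]
      have h4 : ((-1:ℝ)^(J/2)) * ((-1:ℝ)^(J/2)) = 1 := by
        rw [← pow_add]
        exact Even.neg_one_pow ⟨J/2, rfl⟩
      linear_combination 2 * h4
    · rw [if_neg h0]
      have hodd : k % 2 = 1 := by
        push_neg at hk2
        rcases Nat.mod_two_eq_zero_or_one k with h | h
        · have := hk2 (by omega); omega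
        · exact h
      rw [fJk_parity x (by omega)]
      ring
  rw [Finset.sum_congr rfl hP, Finset.sum_congr rfl hQ]
  rw [Finset.sum_ite_eq' ((Finset.range (J+1)).filter (fun k => ¬(2 ≤ k ∧ k % 2 = 0))) 0
    (fun _ => (2:ℝ))]
  rw [if_pos (Finset.mem_filter.mpr ⟨Finset.mem_range.mpr (by omega), by omega⟩)]
  ring

lemma odd_main (J : ℕ) (hJ : 2 ≤ J) (hJo : J % 2 = 1) (σ : ℝ)
    (hσ : σ = (-1:ℝ)^((J+1)/2 + 1)) (x : ℕ → ℝ) :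
    σ * gC J x = ∑ k ∈ (Finset.range (J + 1)).filter (fun k => 1 ≤ k ∧ k % 2 = 1),
      (-1 : ℝ) ^ ((k + 1) / 2) * 2 ^ k * fJk J k x := by
  have hsplit := Finset.sum_filter_add_sum_filter_not (Finset.range (J+1))
    (fun k => 1 ≤ k ∧ k % 2 = 1)
    (fun k => σ * ((-1:ℝ)^((J-k)/2) * (-2)^k * fJk J k x))
  have hstep : σ * gC J x
      = ∑ k ∈ Finset.range (J+1), σ * ((-1:ℝ)^((J-k)/2) * (-2)^k * fJk J k x) := by
    rw [gC_fiber J hJ x, Finset.mul_sum]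
  rw [hstep, ← hsplit]
  have hP : ∀ k ∈ (Finset.range (J+1)).filter (fun k => 1 ≤ k ∧ k % 2 = 1),
      σ * ((-1:ℝ)^((J-k)/2) * (-2)^k * fJk J k x)
        = (-1:ℝ)^((k+1)/2) * 2^k * fJk J k x := by
    intro k hk
    have hk' := Finset.mem_filter.mp hk
    have hk1 := Finset.mem_range.mp hk'.1
    have hk2 := hk'.2.1
    have hk3 := hk'.2.2
    have h1 : σ * (-1:ℝ)^((J-k)/2) * (-1:ℝ) = (-1:ℝ)^((k+1)/2) := by
      rw [hσ]
      have he : (J+1)/2 + 1 + ((J-k)/2 + 1) = 2*((J-k)/2 + 1) + (k+1)/2 := by omega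
      calc (-1:ℝ)^((J+1)/2+1) * (-1:ℝ)^((J-k)/2) * (-1:ℝ)
          = (-1:ℝ) ^ ((J+1)/2 + 1 + ((J-k)/2 + 1)) := by ring
        _ = (-1:ℝ)^((k+1)/2) := by
            rw [he, pow_add, pow_mul]
            norm_num
    have h2 : (-2:ℝ)^k = -(2:ℝ)^k := by
      rw [show (-2:ℝ) = -1 * 2 by norm_num, mul_pow, Odd.neg_one_pow ⟨k/2, by omega⟩]
      ring
    rw [← h1, h2]
    ring
  have hQ : ∀ k ∈ (Finset.range (J+1)).filter (fun k => ¬(1 ≤ k ∧ k % 2 = 1)),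
      σ * ((-1:ℝ)^((J-k)/2) * (-2)^k * fJk J k x) = 0 := by
    intro k hk
    obtain ⟨hk1, hk2⟩ := Finset.mem_filter.mp hk
    have heven : k % 2 = 0 := by
      push_neg at hk2
      rcases Nat.mod_two_eq_zero_or_one k with h | h
      · exact h
      · have := hk2 (by omega); omega
    rw [fJk_parity x (by omega)]
    ring
  rw [Finset.sum_congr rfl hP, Finset.sum_congr rfl hQ, Finset.sum_const_zero]
  ring


lemma filter_one : (Finset.range 2).filter (fun k => 1 ≤ k ∧ k % 2 = 1) = {1} := by decide
lemma filter_two : (Finset.range 3).filter (fun k => 2 ≤ k ∧ k % 2 = 0) = {2} := by decide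
lemma eC11 : edgeCollections 1 1 = {∅} := by decide
lemma eC22 : edgeCollections 2 2 = {∅} := by decide

lemma fJk11 (x : ℕ → ℝ) : fJk 1 1 x = x 0 := by
  rw [fJk, eC11, Finset.sum_singleton]
  simp

lemma fJk22 (x : ℕ → ℝ) : fJk 2 2 x = x 0 * x 1 := by
  rw [fJk, eC22, Finset.sum_singleton]
  simp [Finset.prod_range_succ]

lemma detA1 (ε : ℝ) (x : ℕ → ℝ) : (matA 1 ε x).det = -2 * x 0 + 2 * ε := by
  rw [Matrix.det_fin_one]
  show ((if ((0:Fin 1):ℕ) = ((0:Fin 1):ℕ) then -2 * x ((0:Fin 1):ℕ) else 0) + _ + _ + _) = _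
  norm_num
  ring

lemma detA2 (ε : ℝ) (x : ℕ → ℝ) : (matA 2 ε x).det = 4 * (x 0 * x 1) - (1+ε)^2 := by
  rw [Matrix.det_fin_two]
  have h00 : matA 2 ε x 0 0 = -2 * x 0 := by
    show ((if _ then _ else _) + _ + _ + _ : ℝ) = _
    norm_num
  have h11 : matA 2 ε x 1 1 = -2 * x 1 := by
    show ((if _ then _ else _) + _ + _ + _ : ℝ) = _
    norm_num
  have h01 : matA 2 ε x 0 1 = 1 + ε := by
    show ((if _ then _ else _) + _ + _ + _ : ℝ) = _
    norm_num
  have h10 : matA 2 ε x 1 0 = 1 + ε := by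
    show ((if _ then _ else _) + _ + _ + _ : ℝ) = _
    norm_num
  rw [h00, h11, h01, h10]
  ring

/-- Proposition A.1: explicit expansion of `a_J^±` in the polynomials `f_{J,k}`. -/
theorem aPlus_aMinus_expansion :
    (∀ J : ℕ, 2 ≤ J → J % 2 = 0 → ∀ x : ℕ → ℝ,
      (aPlus J x = ∑ k ∈ (Finset.range (J + 1)).filter (fun k => 2 ≤ k ∧ k % 2 = 0),
          (-4 : ℝ) ^ (k / 2) * fJk J k x) ∧
      aMinus J x = -4 - aPlus J x) ∧
    (∀ J : ℕ, 1 ≤ J → J % 2 = 1 → ∀ x : ℕ → ℝ,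
      (aPlus J x = 2 + ∑ k ∈ (Finset.range (J + 1)).filter (fun k => 1 ≤ k ∧ k % 2 = 1),
          (-1 : ℝ) ^ ((k + 1) / 2) * 2 ^ k * fJk J k x) ∧
      aMinus J x = 4 - aPlus J x) := by
  constructor
  · -- even case
    intro J hJ2 hJe x
    by_cases hJeq : J = 2
    · subst hJeq
      have ha : aPlus 2 x = -4 * (x 0 * x 1) := by
        rw [aPlus, if_neg (by norm_num), detA2]
        ring
      constructor
      · rw [ha, filter_two, Finset.sum_singleton, fJk22]
        norm_num
      · rw [aMinus, if_neg (by norm_num), detA2, ha]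
        ring
    · obtain ⟨n, rfl⟩ : ∃ n, J = n + 3 := ⟨J - 3, by omega⟩
      have h1 := detA_eq_gC n 1 (Or.inl rfl) x
      have h2 := detA_eq_gC n (-1) (Or.inr rfl) x
      have hneg : (-1:ℝ)^n = -1 := Odd.neg_one_pow ⟨n/2, by omega⟩
      rw [hneg] at h1 h2
      rcases (by omega : (n+3) % 4 = 0 ∨ (n+3) % 4 = 2) with h4 | h4
      · have hσ : (1:ℝ) = (-1:ℝ)^((n+3)/2) :=
          (Even.neg_one_pow ⟨(n+3)/4, by omega⟩).symm
        have hmain := even_main (n+3) (by omega) hJe 1 hσ x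
        rw [one_mul] at hmain
        have hap : aPlus (n+3) x = gC (n+3) x - 2 := by
          rw [aPlus, if_pos (Or.inl h4), h1]; ring
        constructor
        · rw [hap]; linarith
        · rw [aMinus, if_pos (Or.inl h4), h2, hap]; ring
      · have hσ : (-1:ℝ) = (-1:ℝ)^((n+3)/2) :=
          (Odd.neg_one_pow ⟨(n+3)/4, by omega⟩).symm
        have hmain := even_main (n+3) (by omega) hJe (-1) hσ x
        have hap : aPlus (n+3) x = -gC (n+3) x - 2 := by
          rw [aPlus, if_neg (by omega), h2]; ring
        constructor
        · rw [hap]; linarith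
        · rw [aMinus, if_neg (by omega), h1, hap]; ring
  · -- odd case
    intro J hJ1 hJo x
    by_cases hJeq : J = 1
    · subst hJeq
      have hp : aPlus 1 x = -2 * x 0 + 2 := by
        rw [aPlus, if_pos (Or.inr rfl), detA1]
        ring
      constructor
      · rw [hp, filter_one, Finset.sum_singleton, fJk11]
        norm_num
        ring
      · rw [aMinus, if_pos (Or.inr rfl), detA1, hp]
        ring
    · obtain ⟨n, rfl⟩ : ∃ n, J = n + 3 := ⟨J - 3, by omega⟩
      have h1 := detA_eq_gC n 1 (Or.inl rfl) x
      have h2 := detA_eq_gC n (-1) (Or.inr rfl) x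
      have hneg : (-1:ℝ)^n = 1 := Even.neg_one_pow ⟨n/2, by omega⟩
      rw [hneg] at h1 h2
      rcases (by omega : (n+3) % 4 = 1 ∨ (n+3) % 4 = 3) with h4 | h4
      · have hσ : (1:ℝ) = (-1:ℝ)^((n+3+1)/2 + 1) :=
          (Even.neg_one_pow ⟨((n+4)/2+1)/2, by omega⟩).symm
        have hmain := odd_main (n+3) (by omega) hJo 1 hσ x
        rw [one_mul] at hmain
        have hap : aPlus (n+3) x = gC (n+3) x + 2 := by
          rw [aPlus, if_pos (Or.inr h4), h1]; ring
        constructor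
        · rw [hap]; linarith
        · rw [aMinus, if_pos (Or.inr h4), h2, hap]; ring
      · have hσ : (-1:ℝ) = (-1:ℝ)^((n+3+1)/2 + 1) :=
          (Odd.neg_one_pow ⟨(n+4)/4, by omega⟩).symm
        have hmain := odd_main (n+3) (by omega) hJo (-1) hσ x
        have hap : aPlus (n+3) x = -gC (n+3) x + 2 := by
          rw [aPlus, if_neg (by omega), h2]; ring
        constructor
        · rw [hap]; linarith
        · rw [aMinus, if_neg (by omega), h1, hap]; ring
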